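/- If a poset P contains a subset order-isomorphic to ℕ (an infinite ascending chain) and a subset order-isomorphic to the dual of ℕ (an infinite descending chain), then P is not sub-representable. -/

import Mathlib

def SubRepresentable (α : Type*) [PartialOrder α] : Prop :=
  ∃ g : Set α → Set α,
    (∀ P₁ P₂ : Set α, Nonempty (↥P₁ ↪o ↥P₂) ↔ g P₁ ⊆ g P₂) ∧
    ∀ P₁ : Set α, Nonempty (↥P₁ ↪o ↥(g P₁)) ∧ Nonempty (↥(g P₁) ↪o ↥P₁)

/-- Set inclusion as an order embedding. -/
def incEmb {α : Type*} [PartialOrder α] {s t : Set α} (h : s ⊆ t) : ↥s ↪o ↥t where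
  toFun := Set.inclusion h
  inj' := Set.inclusion_injective h
  map_rel_iff' := Iff.rfl

lemma nat_no_strictAnti (u : ℕ → ℕ) (h : StrictAnti u) : False := by
  have key : ∀ n, u n + n ≤ u 0 := by
    intro n
    induction n with
    | zero => simp
    | succ k ih => have : u (k + 1) < u k := h (by omega); omega
  have := key (u 0 + 1); omega

lemma finite_of_embs {Y : Type*} [PartialOrder Y] (e₁ : Y ↪o ℕ) (e₂ : Y ↪o ℕᵒᵈ) :
    Finite Y := by
  by_contra h
  rw [not_finite_iff_infinite] at h
  classical
  have hS : (Set.range fun y => e₁ y).Infinite :=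
    Set.infinite_range_of_injective e₁.injective
  haveI : Infinite (Set.range fun y => e₁ y) := hS.to_subtype
  let o := Nat.orderEmbeddingOfSet (Set.range fun y => e₁ y)
  have hmem : ∀ n, ∃ y, e₁ y = o n := by
    intro n
    have : o n ∈ Set.range fun y => e₁ y := by
      rw [← Nat.orderEmbeddingOfSet_range (Set.range fun y => e₁ y)]
      exact Set.mem_range_self n
    exact this
  choose y hy using hmem
  have hmono : StrictMono y := by
    intro m n hmn
    have : e₁ (y m) < e₁ (y n) := by rw [hy, hy]; exact o.strictMono hmn
    exact e₁.lt_iff_lt.mp this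
  have hanti : StrictAnti fun n => OrderDual.ofDual (e₂ (y n)) := by
    intro m n hmn
    exact e₂.strictMono (hmono hmn)
  exact nat_no_strictAnti _ hanti

theorem not_subrep_of_ascending_and_descending (α : Type*) [PartialOrder α]
    (hup : ∃ f : ℕ → α, StrictMono f) (hdown : ∃ g : ℕ → α, StrictAnti g) :
    ¬ SubRepresentable α := by
  rintro ⟨g, hg1, hg2⟩
  obtain ⟨f, hf⟩ := hup
  obtain ⟨d, hd⟩ := hdown
  set A := Set.range f with hA
  set D := Set.range d with hD
  set Y := g A ∩ g D with hY
  obtain ⟨eA⟩ := (hg2 A).2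
  obtain ⟨eD⟩ := (hg2 D).2
  have isoA : ℕ ≃o ↥A := StrictMono.orderIso f hf
  have hd' : StrictMono (fun n : ℕᵒᵈ => d (OrderDual.ofDual n)) := fun m n h => hd h
  have isoD : ℕᵒᵈ ≃o ↥D := StrictMono.orderIso _ hd'
  have e₁ : ↥Y ↪o ℕ :=
    (((incEmb Set.inter_subset_left).trans eA).trans isoA.symm.toOrderEmbedding)
  have e₂ : ↥Y ↪o ℕᵒᵈ :=
    (((incEmb Set.inter_subset_right).trans eD).trans isoD.symm.toOrderEmbedding)
  haveI : Finite ↥Y := finite_of_embs e₁ e₂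
  set m := Nat.card ↥Y with hm
  -- the (m+1)-element chain inside A
  set C := f '' Set.Iio (m + 1) with hC
  set C' := d '' Set.Iio (m + 1) with hC'
  let uC : Fin (m + 1) → ↥C := fun j => ⟨f j, ⟨j, j.isLt, rfl⟩⟩
  have huC : StrictMono uC := fun i j hij => by
    exact hf (show (i : ℕ) < j from hij)
  have hsC : Function.Surjective uC := by
    rintro ⟨x, i, hi, rfl⟩
    exact ⟨⟨i, hi⟩, rfl⟩
  have isoC : Fin (m + 1) ≃o ↥C := StrictMono.orderIsoOfSurjective uC huC hsC
  let uC' : (Fin (m + 1))ᵒᵈ → ↥C' := fun j =>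
    ⟨d ((OrderDual.ofDual j : Fin (m + 1)) : ℕ),
      ⟨((OrderDual.ofDual j : Fin (m + 1)) : ℕ), (OrderDual.ofDual j : Fin (m + 1)).isLt, rfl⟩⟩
  have huC' : StrictMono uC' := fun i j hij => by
    have h2 : (OrderDual.ofDual j : Fin (m + 1)) < (OrderDual.ofDual i : Fin (m + 1)) := hij
    exact
      hd (show ((OrderDual.ofDual j : Fin (m + 1)) : ℕ) <
        ((OrderDual.ofDual i : Fin (m + 1)) : ℕ) from h2)
  have hsC' : Function.Surjective uC' := by
    rintro ⟨x, i, hi, rfl⟩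
    exact ⟨OrderDual.toDual ⟨i, hi⟩, rfl⟩
  have isoC' : (Fin (m + 1))ᵒᵈ ≃o ↥C' := StrictMono.orderIsoOfSurjective uC' huC' hsC'
  -- C embeds into A and into D
  have hCA : Nonempty (↥C ↪o ↥A) := ⟨incEmb (Set.image_subset_range f _)⟩
  have hCD : Nonempty (↥C ↪o ↥D) :=
    ⟨((isoC.symm.trans (Fin.revOrderIso.symm.trans isoC')).toOrderEmbedding).trans
      (incEmb (Set.image_subset_range d _))⟩
  have hsub : g C ⊆ Y := Set.subset_inter ((hg1 C A).mp hCA) ((hg1 C D).mp hCD)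
  obtain ⟨eC⟩ := (hg2 C).1
  -- an injection of Fin (m+1) into Y
  let j : Fin (m + 1) ↪o ↥Y := (isoC.toOrderEmbedding.trans eC).trans (incEmb hsub)
  have hcard : m + 1 ≤ m := by
    have := Nat.card_le_card_of_injective j j.injective
    rw [Nat.card_fin] at this
    exact this
  omega
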